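/- A conformal transformation maps unparametrized conformal circles to unparametrized conformal circles: if f: (M,g) → (N,h) satisfies f*h = Ω²g for a positive smooth Ω, and γ is a non-null solution of the conformal circle system for g, then f∘γ is, after associating b̂ = b − d(log Ω), a solution of the conformal circle system for h. -/

import Mathlib

private lemma sum_rot' (n : ℕ) (f : Fin n → Fin n → Fin n → ℝ) :
    ∑ j, ∑ k, ∑ l, f j k l = ∑ l, ∑ j, ∑ k, f j k l :=
  (Finset.sum_congr rfl fun _ _ => Finset.sum_comm).trans Finset.sum_comm

private lemma tripleS' (n : ℕ) (g ginv : Matrix (Fin n) (Fin n) ℝ) (c u v : Fin n → ℝ) (i : Fin n) :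
  ∑ j, ∑ k, ∑ l, (((if j = i then (1:ℝ) else 0)*(if k = l then (1:ℝ) else 0)
      + (if j = l then (1:ℝ) else 0)*(if k = i then (1:ℝ) else 0) - g j k * ginv i l) * c l * u j * v k)
  = u i * (∑ l, c l * v l) + v i * (∑ l, c l * u l)
    - (∑ j, ∑ k, g j k * u j * v k) * (∑ l, ginv i l * c l) := by
  simp only [add_mul, sub_mul, mul_ite, mul_one, mul_zero, ite_mul, zero_mul, one_mul,
    Finset.sum_add_distrib, Finset.sum_sub_distrib, Finset.sum_ite_eq, Finset.sum_ite_eq',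
    Finset.sum_ite_irrel, Finset.sum_const_zero,
    Finset.mem_univ, if_true, Finset.mul_sum, Finset.sum_mul]
  rw [sum_rot' n (fun j k l => g j k * ginv i l * c l * u j * v k)]
  refine congrArg₂ Sub.sub
    (congrArg₂ HAdd.hAdd (Finset.sum_congr rfl fun x _ => by ring)
      (Finset.sum_congr rfl fun x _ => by ring))
    (Finset.sum_congr rfl fun x _ => Finset.sum_congr rfl fun y _ =>
        Finset.sum_congr rfl fun z _ => by ring)

private lemma gammaA' (n : ℕ) (g ginv : Matrix (Fin n) (Fin n) ℝ) (w u v : Fin n → ℝ) (i : Fin n) :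
  ∑ j, ∑ k, (((if j = i then w k else 0) + (if k = i then w j else 0)
      - g j k * ∑ l, ginv i l * w l) * u j * v k)
  = u i * (∑ k, w k * v k) + v i * (∑ j, w j * u j)
    - (∑ j, ∑ k, g j k * u j * v k) * (∑ l, ginv i l * w l) := by
  simp only [add_mul, sub_mul, mul_ite, mul_one, mul_zero, ite_mul, zero_mul, one_mul,
    Finset.sum_add_distrib, Finset.sum_sub_distrib, Finset.sum_ite_eq, Finset.sum_ite_eq',
    Finset.sum_ite_irrel, Finset.sum_const_zero,
    Finset.mem_univ, if_true, Finset.mul_sum, Finset.sum_mul]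
  refine congrArg₂ Sub.sub
    (congrArg₂ HAdd.hAdd (Finset.sum_congr rfl fun x _ => by ring)
      (Finset.sum_congr rfl fun x _ => by ring)) ?_
  rw [sum_rot' n (fun j k l => g j k * (ginv i l * w l) * u j * v k)]
  exact Finset.sum_congr rfl fun x _ => Finset.sum_congr rfl fun y _ =>
    Finset.sum_congr rfl fun z _ => by ring

private lemma gammaB' (n : ℕ) (g ginv : Matrix (Fin n) (Fin n) ℝ) (w u c : Fin n → ℝ) (i : Fin n) :
  ∑ j, ∑ k, (((if i = k then w j else 0) + (if j = k then w i else 0)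
      - g i j * ∑ l, ginv k l * w l) * u j * c k)
  = c i * (∑ j, w j * u j) + w i * (∑ k, u k * c k)
    - (∑ j, g i j * u j) * (∑ k, (∑ l, ginv k l * w l) * c k) := by
  simp only [add_mul, sub_mul, mul_ite, mul_one, mul_zero, ite_mul, zero_mul, one_mul,
    Finset.sum_add_distrib, Finset.sum_sub_distrib, Finset.sum_ite_eq, Finset.sum_ite_eq',
    Finset.sum_ite_irrel, Finset.sum_const_zero,
    Finset.mem_univ, if_true, Finset.mul_sum, Finset.sum_mul]
  refine congrArg₂ Sub.sub
    (congrArg₂ HAdd.hAdd (Finset.sum_congr rfl fun x _ => by ring)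
      (Finset.sum_congr rfl fun x _ => by ring)) ?_
  rw [sum_rot' n (fun j k l => g i j * (ginv k l * w l) * u j * c k),
    sum_rot' n (fun l j k => g i j * (ginv k l * w l) * u j * c k)]
  exact Finset.sum_congr rfl fun x _ => Finset.sum_congr rfl fun y _ =>
    Finset.sum_congr rfl fun z _ => by ring

private lemma sumB' (n : ℕ) (g ginv : Matrix (Fin n) (Fin n) ℝ) (c u : Fin n → ℝ) (i : Fin n) :
  ∑ k, ((1/2 : ℝ) * ∑ j, ∑ l, c j * c l *
        ((if k = j then (1:ℝ) else 0) * (if i = l then (1:ℝ) else 0)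
          + (if k = l then (1:ℝ) else 0) * (if i = j then (1:ℝ) else 0)
          - g k i * ginv j l)) * u k
  = c i * (∑ k, c k * u k)
    - (1/2 : ℝ) * (∑ j, ∑ l, ginv j l * c j * c l) * (∑ k, g k i * u k) := by
  have inner : ∀ k, (∑ j, ∑ l, c j * c l *
        ((if k = j then (1:ℝ) else 0) * (if i = l then (1:ℝ) else 0)
          + (if k = l then (1:ℝ) else 0) * (if i = j then (1:ℝ) else 0)
          - g k i * ginv j l))
      = 2 * (c i * c k) - g k i * (∑ j, ∑ l, ginv j l * c j * c l) := by
    intro k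
    simp only [mul_add, mul_sub, mul_ite, mul_one, mul_zero, ite_mul, zero_mul, one_mul,
      Finset.sum_add_distrib, Finset.sum_sub_distrib, Finset.sum_ite_eq, Finset.sum_ite_eq',
      Finset.sum_ite_irrel, Finset.sum_const_zero, Finset.mem_univ, if_true,
      Finset.mul_sum, Finset.sum_mul]
    refine congrArg₂ Sub.sub (by ring)
      (Finset.sum_congr rfl fun x _ => Finset.sum_congr rfl fun y _ => by ring)
  calc ∑ k, ((1/2 : ℝ) * ∑ j, ∑ l, c j * c l *
        ((if k = j then (1:ℝ) else 0) * (if i = l then (1:ℝ) else 0)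
          + (if k = l then (1:ℝ) else 0) * (if i = j then (1:ℝ) else 0)
          - g k i * ginv j l)) * u k
      = ∑ k, ((1/2 : ℝ) * (2 * (c i * c k) - g k i * (∑ j, ∑ l, ginv j l * c j * c l))) * u k :=
        Finset.sum_congr rfl fun k _ => by rw [inner k]
    _ = c i * (∑ k, c k * u k)
        - (1/2 : ℝ) * (∑ j, ∑ l, ginv j l * c j * c l) * (∑ k, g k i * u k) := by
        rw [Finset.mul_sum, Finset.mul_sum, ← Finset.sum_sub_distrib]
        exact Finset.sum_congr rfl fun k _ => by ring

private lemma logSmooth' (n : ℕ) (Ω : (Fin n → ℝ) → ℝ) (hΩpos : ∀ x, 0 < Ω x)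
    (hΩsm : ContDiff ℝ (⊤ : ℕ∞) Ω) :
    ContDiff ℝ (⊤ : ℕ∞) (fun y => Real.log (Ω y)) := by
  rw [contDiff_iff_contDiffAt]
  intro x
  exact (Real.contDiffAt_log.mpr (hΩpos x).ne').comp x hΩsm.contDiffAt

private lemma upsSmooth' (n : ℕ) (Ω : (Fin n → ℝ) → ℝ) (hΩpos : ∀ x, 0 < Ω x)
    (hΩsm : ContDiff ℝ (⊤ : ℕ∞) Ω ) (j : Fin n) :
    ContDiff ℝ (⊤ : ℕ∞) (fun x => fderiv ℝ (fun y => Real.log (Ω y)) x (Pi.single j 1)) := by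
  have hF : ContDiff ℝ (⊤ : ℕ∞) (fun x => fderiv ℝ (fun y => Real.log (Ω y)) x) :=
    (logSmooth' n Ω hΩpos hΩsm).fderiv_right (by exact_mod_cast le_top)
  exact hF.clm_apply contDiff_const

private lemma derivProj' (n : ℕ) (γ : ℝ → Fin n → ℝ) (hγ : Differentiable ℝ γ) (k : Fin n) (τ : ℝ) :
    deriv (fun s => γ s k) τ = deriv γ τ k := by
  have h := (ContinuousLinearMap.proj (R := ℝ) (φ := fun _ : Fin n => ℝ) k).hasFDerivAt
    |>.comp_hasDerivAt τ (hγ τ).hasDerivAt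
  simpa [Function.comp_def] using h.deriv

private lemma piDecomp' (n : ℕ) (v : Fin n → ℝ) :
    v = ∑ k, v k • (Pi.single k (1:ℝ) : Fin n → ℝ) := by
  ext j
  simp [Finset.sum_apply, Pi.single_apply]

private lemma chainD' (n : ℕ) (Υi : (Fin n → ℝ) → ℝ) (hΥi : ContDiff ℝ (⊤ : ℕ∞) Υi)
    (γ : ℝ → Fin n → ℝ) (hγsm : ContDiff ℝ (⊤ : ℕ∞) γ) (τ : ℝ) :
    deriv (fun t => Υi (γ t)) τ
      = ∑ k, deriv (fun s => γ s k) τ * fderiv ℝ Υi (γ τ) (Pi.single k 1) := by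
  have hγd : Differentiable ℝ γ := hγsm.differentiable (by simp)
  have h := ((hΥi.differentiable (by simp) (γ τ)).hasFDerivAt).comp_hasDerivAt
    τ (hγd τ).hasDerivAt
  rw [show (fun t => Υi (γ t)) = Υi ∘ γ from rfl, h.deriv]
  nth_rewrite 1 [piDecomp' n (deriv γ τ)]
  rw [map_sum]
  exact Finset.sum_congr rfl fun k _ => by
    rw [derivProj' n γ hγd k τ, ContinuousLinearMap.map_smul, smul_eq_mul]



/-- A conformal change maps conformal circles to conformal circles (stated for
`M = N = ℝⁿ` with flat background metric `g` — a constant symmetric invertible matrix,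
so `Γ = 0`, `P = 0` — and `ĝ = Ω² g`, `f = id`).  If `(γ, b)` solves the conformal
circle system for `g`, then `(γ, b̂)` with `b̂ = b − d(log Ω)∘γ` solves the system for
`ĝ`, whose Christoffel symbols are `Γ̂^k_{ij} = δ_i^k Υ_j + δ_j^k Υ_i − g_{ij} g^{kl}Υ_l`
and whose Schouten tensor is `P̂_{ij} = −∂_iΥ_j + Υ_iΥ_j − ½ Υ_kΥ^k g_{ij}`, with
`Υ = d log Ω`. -/
theorem stmt11 (n : ℕ) (hn : 3 ≤ n)
    (g ginv : Matrix (Fin n) (Fin n) ℝ) (hgsymm : g.IsSymm) (hinv : g * ginv = 1)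
    (S : Fin n → Fin n → Fin n → Fin n → ℝ)
    (hS : ∀ i j k l, S i j k l =
      (if i = k then (1:ℝ) else 0) * (if j = l then (1:ℝ) else 0)
      + (if i = l then (1:ℝ) else 0) * (if j = k then (1:ℝ) else 0)
      - g i j * ginv k l)
    (Ω : (Fin n → ℝ) → ℝ) (hΩpos : ∀ x, 0 < Ω x) (hΩsm : ContDiff ℝ (⊤ : ℕ∞) Ω)
    -- Υ = d log Ω
    (Υ : (Fin n → ℝ) → Fin n → ℝ)
    (hΥ : ∀ x j, Υ x j = fderiv ℝ (fun y => Real.log (Ω y)) x (Pi.single j 1))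
    -- Ŝ, the S-tensor of ĝ = Ω² g
    (Shat : (Fin n → ℝ) → Fin n → Fin n → Fin n → Fin n → ℝ)
    (hShat : ∀ x i j k l, Shat x i j k l =
      (if i = k then (1:ℝ) else 0) * (if j = l then (1:ℝ) else 0)
      + (if i = l then (1:ℝ) else 0) * (if j = k then (1:ℝ) else 0)
      - ((Ω x) ^ 2 * g i j) * (((Ω x) ^ 2)⁻¹ * ginv k l))
    -- Christoffel symbols of ĝ (the background g is flat with Γ = 0)
    (Γhat : (Fin n → ℝ) → Fin n → Fin n → Fin n → ℝ)
    (hΓhat : ∀ x k i j, Γhat x k i j =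
      (if i = k then Υ x j else 0) + (if j = k then Υ x i else 0)
        - g i j * ∑ l, ginv k l * Υ x l)
    -- Schouten tensor of ĝ (that of flat g vanishes)
    (Phat : (Fin n → ℝ) → Fin n → Fin n → ℝ)
    (hPhat : ∀ x i j, Phat x i j =
      - fderiv ℝ (fun y => Υ y j) x (Pi.single i 1) + Υ x i * Υ x j
        - (1/2) * (∑ k, ∑ l, ginv k l * Υ x k * Υ x l) * g i j)
    (γ : ℝ → Fin n → ℝ) (hγsm : ContDiff ℝ (⊤ : ℕ∞) γ)
    (b : ℝ → Fin n → ℝ) (hbsm : ContDiff ℝ (⊤ : ℕ∞) b)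
    -- γ is non-null
    (hnonnull : ∀ τ : ℝ,
      (∑ i, ∑ j, g i j * deriv (fun s => γ s i) τ * deriv (fun s => γ s j) τ) ≠ 0)
    -- (γ, b) solves the conformal circle system for g (P = 0, Γ = 0)
    (hγeq : ∀ (τ : ℝ) (i : Fin n),
      deriv (fun t => deriv (fun s => γ s i) t) τ
        = - ∑ j, ∑ k, ∑ l,
            S j k i l * b τ l * deriv (fun s => γ s j) τ * deriv (fun s => γ s k) τ)
    (hbeq : ∀ (τ : ℝ) (i : Fin n),
      deriv (fun t => b t i) τ
        = ∑ k, ((1/2) * ∑ j, ∑ l, b τ j * b τ l * S k i j l)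
            * deriv (fun s => γ s k) τ)
    (bhat : ℝ → Fin n → ℝ) (hbhat : ∀ τ l, bhat τ l = b τ l - Υ (γ τ) l) :
    -- (γ, b̂) solves the conformal circle system for ĝ = Ω² g
    (∀ (τ : ℝ) (i : Fin n),
      deriv (fun t => deriv (fun s => γ s i) t) τ
        + ∑ j, ∑ k, Γhat (γ τ) i j k
            * deriv (fun s => γ s j) τ * deriv (fun s => γ s k) τ
        = - ∑ j, ∑ k, ∑ l, Shat (γ τ) j k i l * bhat τ l
            * deriv (fun s => γ s j) τ * deriv (fun s => γ s k) τ)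
    ∧ (∀ (τ : ℝ) (i : Fin n),
      deriv (fun t => bhat t i) τ
        - ∑ j, ∑ k, Γhat (γ τ) k i j * deriv (fun s => γ s j) τ * bhat τ k
        = ∑ k, ((1/2) * (∑ j, ∑ l, bhat τ j * bhat τ l * Shat (γ τ) k i j l)
              + Phat (γ τ) k i)
            * deriv (fun s => γ s k) τ) := by
  -- symmetry facts
  have hgs : ∀ a b, g a b = g b a := fun a b => by
    have h := congrFun (congrFun hgsymm a) b
    rw [Matrix.transpose_apply] at h
    exact h.symm
  have hginvT : Matrix.transpose ginv = ginv := by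
    have h1 : Matrix.transpose ginv * g = 1 := by
      have h2 := congrArg Matrix.transpose hinv
      rwa [Matrix.transpose_mul, Matrix.transpose_one, hgsymm] at h2
    calc Matrix.transpose ginv = Matrix.transpose ginv * (g * ginv) := by
          rw [hinv, Matrix.mul_one]
      _ = (Matrix.transpose ginv * g) * ginv := by rw [Matrix.mul_assoc]
      _ = ginv := by rw [h1, Matrix.one_mul]
  have hginvs : ∀ a b, ginv a b = ginv b a := fun a b => by
    have h := congrFun (congrFun hginvT a) b
    rw [Matrix.transpose_apply] at h
    exact h.symm
  -- Shat = S (the Ω-factors cancel)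
  have hSS : ∀ x (a b cc d : Fin n), Shat x a b cc d =
      (if a = cc then (1:ℝ) else 0) * (if b = d then (1:ℝ) else 0)
      + (if a = d then (1:ℝ) else 0) * (if b = cc then (1:ℝ) else 0)
      - g a b * ginv cc d := by
    intro x a b cc d
    rw [hShat, mul_mul_mul_comm, mul_inv_cancel₀ (pow_ne_zero 2 (hΩpos x).ne'), one_mul]
  constructor
  · -- first equation
    intro τ i
    rw [hγeq τ i]
    have h1 : (∑ j, ∑ k, ∑ l, S j k i l * b τ l
          * deriv (fun s => γ s j) τ * deriv (fun s => γ s k) τ)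
        = deriv (fun s => γ s i) τ * (∑ l, b τ l * deriv (fun s => γ s l) τ)
          + deriv (fun s => γ s i) τ * (∑ l, b τ l * deriv (fun s => γ s l) τ)
          - (∑ j, ∑ k, g j k * deriv (fun s => γ s j) τ * deriv (fun s => γ s k) τ)
            * (∑ l, ginv i l * b τ l) := by
      simpa only [hS] using tripleS' n g ginv (b τ)
        (fun k => deriv (fun s => γ s k) τ) (fun k => deriv (fun s => γ s k) τ) i
    have h2 : (∑ j, ∑ k, Γhat (γ τ) i j k
          * deriv (fun s => γ s j) τ * deriv (fun s => γ s k) τ)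
        = deriv (fun s => γ s i) τ * (∑ k, Υ (γ τ) k * deriv (fun s => γ s k) τ)
          + deriv (fun s => γ s i) τ * (∑ k, Υ (γ τ) k * deriv (fun s => γ s k) τ)
          - (∑ j, ∑ k, g j k * deriv (fun s => γ s j) τ * deriv (fun s => γ s k) τ)
            * (∑ l, ginv i l * Υ (γ τ) l) := by
      simpa only [hΓhat] using gammaA' n g ginv (Υ (γ τ))
        (fun k => deriv (fun s => γ s k) τ) (fun k => deriv (fun s => γ s k) τ) i
    have h3 : (∑ j, ∑ k, ∑ l, Shat (γ τ) j k i l * bhat τ l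
          * deriv (fun s => γ s j) τ * deriv (fun s => γ s k) τ)
        = deriv (fun s => γ s i) τ * (∑ l, bhat τ l * deriv (fun s => γ s l) τ)
          + deriv (fun s => γ s i) τ * (∑ l, bhat τ l * deriv (fun s => γ s l) τ)
          - (∑ j, ∑ k, g j k * deriv (fun s => γ s j) τ * deriv (fun s => γ s k) τ)
            * (∑ l, ginv i l * bhat τ l) := by
      simpa only [hSS] using tripleS' n g ginv (bhat τ)
        (fun k => deriv (fun s => γ s k) τ) (fun k => deriv (fun s => γ s k) τ) i
    have h4 : (∑ l, bhat τ l * deriv (fun s => γ s l) τ)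
        = (∑ l, b τ l * deriv (fun s => γ s l) τ)
          - (∑ l, Υ (γ τ) l * deriv (fun s => γ s l) τ) := by
      simp only [hbhat, sub_mul, Finset.sum_sub_distrib]
    have h5 : (∑ l, ginv i l * bhat τ l)
        = (∑ l, ginv i l * b τ l) - (∑ l, ginv i l * Υ (γ τ) l) := by
      simp only [hbhat, mul_sub, Finset.sum_sub_distrib]
    rw [h1, h2, h3, h4, h5]
    ring
  · -- second equation
    intro τ i
    -- differentiability facts
    have hΥsm_i : ContDiff ℝ (⊤ : ℕ∞) (fun x => Υ x i) := by
      have he : (fun x => Υ x i)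
          = fun x => fderiv ℝ (fun y => Real.log (Ω y)) x (Pi.single i 1) :=
        funext fun x => hΥ x i
      rw [he]; exact upsSmooth' n Ω hΩpos hΩsm i
    have hbdiff : DifferentiableAt ℝ (fun t => b t i) τ := by
      have h := (ContinuousLinearMap.proj (R := ℝ) (φ := fun _ : Fin n => ℝ) i).hasFDerivAt
        |>.comp_hasDerivAt τ ((hbsm.differentiable (by simp)) τ).hasDerivAt
      simpa [Function.comp_def] using h.differentiableAt
    have hΥγdiff : DifferentiableAt ℝ (fun t => Υ (γ t) i) τ :=
      ((hΥsm_i.differentiable (by simp)).comp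
        (hγsm.differentiable (by simp))) τ
    have hfun : (fun t => bhat t i) = fun t => b t i - Υ (γ t) i :=
      funext fun t => hbhat t i
    have hder : deriv (fun t => bhat t i) τ
        = deriv (fun t => b t i) τ
          - ∑ k, deriv (fun s => γ s k) τ
              * fderiv ℝ (fun y => Υ y i) (γ τ) (Pi.single k 1) := by
      rw [hfun, deriv_fun_sub hbdiff hΥγdiff]
      congr 1
      exact chainD' n (fun x => Υ x i) hΥsm_i γ hγsm τ
    have h6 : (∑ k, ((1/2 : ℝ) * ∑ j, ∑ l, b τ j * b τ l * S k i j l)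
          * deriv (fun s => γ s k) τ)
        = b τ i * (∑ k, b τ k * deriv (fun s => γ s k) τ)
          - (1/2 : ℝ) * (∑ j, ∑ l, ginv j l * b τ j * b τ l)
            * (∑ k, g k i * deriv (fun s => γ s k) τ) := by
      simpa only [hS] using sumB' n g ginv (b τ) (fun k => deriv (fun s => γ s k) τ) i
    have h7 : (∑ j, ∑ k, Γhat (γ τ) k i j * deriv (fun s => γ s j) τ * bhat τ k)
        = bhat τ i * (∑ j, Υ (γ τ) j * deriv (fun s => γ s j) τ)
          + Υ (γ τ) i * (∑ k, deriv (fun s => γ s k) τ * bhat τ k)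
          - (∑ j, g i j * deriv (fun s => γ s j) τ)
            * (∑ k, (∑ l, ginv k l * Υ (γ τ) l) * bhat τ k) := by
      simpa only [hΓhat] using gammaB' n g ginv (Υ (γ τ))
        (fun k => deriv (fun s => γ s k) τ) (bhat τ) i
    have h8 : (∑ k, ((1/2 : ℝ) * (∑ j, ∑ l, bhat τ j * bhat τ l * Shat (γ τ) k i j l)
            + Phat (γ τ) k i) * deriv (fun s => γ s k) τ)
        = (∑ k, ((1/2 : ℝ) * ∑ j, ∑ l, bhat τ j * bhat τ l * Shat (γ τ) k i j l)
            * deriv (fun s => γ s k) τ)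
          + ∑ k, Phat (γ τ) k i * deriv (fun s => γ s k) τ := by
      simp only [add_mul, Finset.sum_add_distrib]
    have h9 : (∑ k, ((1/2 : ℝ) * ∑ j, ∑ l, bhat τ j * bhat τ l * Shat (γ τ) k i j l)
          * deriv (fun s => γ s k) τ)
        = bhat τ i * (∑ k, bhat τ k * deriv (fun s => γ s k) τ)
          - (1/2 : ℝ) * (∑ j, ∑ l, ginv j l * bhat τ j * bhat τ l)
            * (∑ k, g k i * deriv (fun s => γ s k) τ) := by
      simpa only [hSS] using sumB' n g ginv (bhat τ) (fun k => deriv (fun s => γ s k) τ) i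
    have h10 : (∑ k, Phat (γ τ) k i * deriv (fun s => γ s k) τ)
        = -(∑ k, deriv (fun s => γ s k) τ
              * fderiv ℝ (fun y => Υ y i) (γ τ) (Pi.single k 1))
          + Υ (γ τ) i * (∑ k, Υ (γ τ) k * deriv (fun s => γ s k) τ)
          - (1/2 : ℝ) * (∑ k, ∑ l, ginv k l * Υ (γ τ) k * Υ (γ τ) l)
            * (∑ k, g k i * deriv (fun s => γ s k) τ) := by
      calc (∑ k, Phat (γ τ) k i * deriv (fun s => γ s k) τ)
          = ∑ k, (-(deriv (fun s => γ s k) τ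
                * fderiv ℝ (fun y => Υ y i) (γ τ) (Pi.single k 1))
              + Υ (γ τ) i * (Υ (γ τ) k * deriv (fun s => γ s k) τ)
              - ((1/2 : ℝ) * (∑ a, ∑ c, ginv a c * Υ (γ τ) a * Υ (γ τ) c))
                * (g k i * deriv (fun s => γ s k) τ)) :=
            Finset.sum_congr rfl fun k _ => by rw [hPhat]; ring
        _ = _ := by
            rw [Finset.sum_sub_distrib, Finset.sum_add_distrib, ← Finset.sum_neg_distrib,
              ← Finset.mul_sum, ← Finset.mul_sum]
    have h11 : bhat τ i = b τ i - Υ (γ τ) i := hbhat τ i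
    have h12 : (∑ k, bhat τ k * deriv (fun s => γ s k) τ)
        = (∑ k, b τ k * deriv (fun s => γ s k) τ)
          - (∑ k, Υ (γ τ) k * deriv (fun s => γ s k) τ) := by
      simp only [hbhat, sub_mul, Finset.sum_sub_distrib]
    have h13 : (∑ k, deriv (fun s => γ s k) τ * bhat τ k)
        = (∑ k, b τ k * deriv (fun s => γ s k) τ)
          - (∑ k, Υ (γ τ) k * deriv (fun s => γ s k) τ) := by
      simp only [hbhat, mul_sub, Finset.sum_sub_distrib]
      exact congrArg₂ Sub.sub (Finset.sum_congr rfl fun k _ => mul_comm _ _)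
        (Finset.sum_congr rfl fun k _ => mul_comm _ _)
    have hMsym : (∑ j, ∑ l, ginv j l * Υ (γ τ) j * b τ l)
        = ∑ j, ∑ l, ginv j l * b τ j * Υ (γ τ) l := by
      rw [Finset.sum_comm]
      exact Finset.sum_congr rfl fun a _ => Finset.sum_congr rfl fun c _ => by
        rw [hginvs c a]; ring
    have h14 : (∑ j, ∑ l, ginv j l * bhat τ j * bhat τ l)
        = (∑ j, ∑ l, ginv j l * b τ j * b τ l)
          - (∑ j, ∑ l, ginv j l * b τ j * Υ (γ τ) l)
          - (∑ j, ∑ l, ginv j l * b τ j * Υ (γ τ) l)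
          + (∑ k, ∑ l, ginv k l * Υ (γ τ) k * Υ (γ τ) l) := by
      calc (∑ j, ∑ l, ginv j l * bhat τ j * bhat τ l)
          = ∑ j, ∑ l, (ginv j l * b τ j * b τ l - ginv j l * b τ j * Υ (γ τ) l
              - ginv j l * Υ (γ τ) j * b τ l + ginv j l * Υ (γ τ) j * Υ (γ τ) l) :=
            Finset.sum_congr rfl fun j _ => Finset.sum_congr rfl fun l _ => by
              rw [hbhat, hbhat]; ring
        _ = _ := by
            simp only [Finset.sum_add_distrib, Finset.sum_sub_distrib]
            rw [hMsym]
    have h15 : (∑ k, (∑ l, ginv k l * Υ (γ τ) l) * bhat τ k)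
        = (∑ j, ∑ l, ginv j l * b τ j * Υ (γ τ) l)
          - (∑ k, ∑ l, ginv k l * Υ (γ τ) k * Υ (γ τ) l) := by
      calc (∑ k, (∑ l, ginv k l * Υ (γ τ) l) * bhat τ k)
          = ∑ k, ∑ l, (ginv k l * b τ k * Υ (γ τ) l
              - ginv k l * Υ (γ τ) k * Υ (γ τ) l) :=
            Finset.sum_congr rfl fun k _ => by
              rw [Finset.sum_mul]
              exact Finset.sum_congr rfl fun l _ => by rw [hbhat]; ring
        _ = _ := by simp only [Finset.sum_sub_distrib]
    have h16 : (∑ j, g i j * deriv (fun s => γ s j) τ)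
        = ∑ k, g k i * deriv (fun s => γ s k) τ :=
      Finset.sum_congr rfl fun j _ => by rw [hgs i j]
    rw [hder, hbeq τ i, h6, h7, h8, h9, h10, h12, h13, h14, h15, h16, h11]
    ring
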